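/- Let X be a nonempty finite set and r : X × X → X × X an involutive map satisfying the set-theoretic Yang–Baxter equation, with linearization T. Then the twisted symmetrizers P_{T,n} are injective for all n ∈ ℕ if and only if r = id on X × X. -/

import Mathlib

/-- The first leg map `r₁(x,y,z) = (r(x,y).1, r(x,y).2, z)`. -/
def ybeLeg1 {X : Type*} (r : X × X → X × X) : X × X × X → X × X × X :=
  fun p => ((r (p.1, p.2.1)).1, (r (p.1, p.2.1)).2, p.2.2)

/-- The second leg map `r₂(x,y,z) = (x, r(y,z).1, r(y,z).2)`. -/
def ybeLeg2 {X : Type*} (r : X × X → X × X) : X × X × X → X × X × X :=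
  fun p => (p.1, r p.2)

/-- The set-theoretic Yang–Baxter equation. -/
def SetTheoreticYBE {X : Type*} (r : X × X → X × X) : Prop :=
  ybeLeg1 r ∘ ybeLeg2 r ∘ ybeLeg1 r = ybeLeg2 r ∘ ybeLeg1 r ∘ ybeLeg2 r

/-- The map `σ_k` applying `r` to the coordinates `k-1, k` (0-indexed) of a word in `Fin n → X`,
for `1 ≤ k ≤ n - 1`; it is the identity outside this range of `k`. -/
def sigmaMap {X : Type*} [DecidableEq X] (r : X × X → X × X) (n k : ℕ) (f : Fin n → X) :
    Fin n → X :=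
  if h : 1 ≤ k ∧ k < n then
    fun j =>
      if j = (⟨k - 1, by omega⟩ : Fin n) then (r (f ⟨k - 1, by omega⟩, f ⟨k, h.2⟩)).1
      else if j = (⟨k, h.2⟩ : Fin n) then (r (f ⟨k - 1, by omega⟩, f ⟨k, h.2⟩)).2
      else f j
  else f

/-- The matrix of the operator `T_k` on `EuclideanSpace ℂ (Fin n → X)` determined by
`T_k(e_f) = e_{σ_k f}`. -/
def sigmaTMat {X : Type*} [Fintype X] [DecidableEq X] (r : X × X → X × X) (n k : ℕ) :
    Matrix (Fin n → X) (Fin n → X) ℂ :=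
  Matrix.of fun g f => if g = sigmaMap r n k f then 1 else 0

/-- The ampliation `E_n(P)` acting as the identity on the 0-th coordinate and as `P` on the
remaining `n` coordinates. -/
def ampMat {X : Type*} [DecidableEq X] (n : ℕ) (P : Matrix (Fin n → X) (Fin n → X) ℂ) :
    Matrix (Fin (n + 1) → X) (Fin (n + 1) → X) ℂ :=
  Matrix.of fun g f => if g 0 = f 0 then P (g ∘ Fin.succ) (f ∘ Fin.succ) else 0

/-- The twisted symmetrizers `P_{T,n}`, defined by the left recursion
`P_{T,n+1} = E_n(P_{T,n}) * (1 + T_1 + T_1 T_2 + ⋯ + T_1 ⋯ T_n)`. -/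
noncomputable def twistedSymmetrizer {X : Type*} [Fintype X] [DecidableEq X] (r : X × X → X × X) :
    (n : ℕ) → Matrix (Fin n → X) (Fin n → X) ℂ
  | 0 => 1
  | n + 1 =>
      ampMat n (twistedSymmetrizer r n) *
        ∑ k ∈ Finset.range (n + 1),
          ((List.range k).map (fun j => sigmaTMat r (n + 1) (j + 1))).prod


section Aux

variable {X : Type*} [Fintype X] [DecidableEq X]

omit [Fintype X] in
lemma ampMat_one (n : ℕ) : ampMat (X := X) n (1 : Matrix _ _ ℂ) = 1 := by
  ext g f
  simp only [ampMat, Matrix.of_apply, Matrix.one_apply]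
  rcases eq_or_ne g f with h | h
  · subst h; simp
  · rw [if_neg h]
    split_ifs with h0 h1
    · exact absurd (funext fun j => Fin.cases h0 (fun i => congrFun h1 i) j) h
    · rfl
    · rfl

omit [Fintype X] in
lemma ampMat_smul (n : ℕ) (c : ℂ) (P : Matrix (Fin n → X) (Fin n → X) ℂ) :
    ampMat n (c • P) = c • ampMat n P := by
  ext g f
  simp only [ampMat, Matrix.of_apply, Matrix.smul_apply, smul_eq_mul]
  split_ifs <;> simp

omit [Fintype X] in
lemma sigmaMap_id (n k : ℕ) : sigmaMap (X := X) id n k = id := by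
  funext f j
  unfold sigmaMap
  split_ifs with h
  · simp only [id_eq]
    split_ifs with h1 h2 <;> simp_all
  · rfl

lemma sigmaTMat_id (n k : ℕ) : sigmaTMat (X := X) id n k = 1 := by
  ext g f
  simp [sigmaTMat, sigmaMap_id, Matrix.one_apply]

lemma twistedSymmetrizer_id (n : ℕ) :
    twistedSymmetrizer (X := X) id n = (n.factorial : ℂ) • 1 := by
  induction n with
  | zero => simp [twistedSymmetrizer]
  | succ n ih =>
    rw [show twistedSymmetrizer (X := X) id (n + 1) =
        ampMat n (twistedSymmetrizer id n) *
          ∑ k ∈ Finset.range (n + 1),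
            ((List.range k).map (fun j => sigmaTMat id (n + 1) (j + 1))).prod from rfl,
      ih, ampMat_smul, ampMat_one]
    have hprod : ∀ k, ((List.range k).map
        (fun j => sigmaTMat (X := X) id (n + 1) (j + 1))).prod = 1 := by
      intro k
      induction k with
      | zero => simp
      | succ k ihk => rw [List.range_succ]; simp [sigmaTMat_id, ihk]
    have hsum : ∑ k ∈ Finset.range (n + 1),
        ((List.range k).map (fun j => sigmaTMat (X := X) id (n + 1) (j + 1))).prod
        = ((n : ℂ) + 1) • 1 := by
      simp only [hprod, Finset.sum_const, Finset.card_range]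
      rw [← Nat.cast_smul_eq_nsmul ℂ]
      norm_num
    rw [hsum, smul_mul_smul_comm, one_mul]
    congr 1
    push_cast [Nat.factorial_succ]
    ring

omit [Fintype X] in
lemma sigmaMap_two (r : X × X → X × X) (f : Fin 2 → X) :
    sigmaMap r 2 1 f = ![(r (f 0, f 1)).1, (r (f 0, f 1)).2] := by
  funext j
  unfold sigmaMap
  rw [dif_pos (by omega : (1:ℕ) ≤ 1 ∧ 1 < 2)]
  fin_cases j <;> simp

lemma twistedSymmetrizer_two (r : X × X → X × X) :
    twistedSymmetrizer r 2 = 1 + sigmaTMat r 2 1 := by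
  have h1 : twistedSymmetrizer r 1 = 1 := by
    rw [show twistedSymmetrizer r 1 =
        ampMat 0 (twistedSymmetrizer r 0) *
          ∑ k ∈ Finset.range 1,
            ((List.range k).map (fun j => sigmaTMat r 1 (j + 1))).prod from rfl]
    simp [twistedSymmetrizer, ampMat_one]
  rw [show twistedSymmetrizer r 2 =
      ampMat 1 (twistedSymmetrizer r 1) *
        ∑ k ∈ Finset.range 2,
          ((List.range k).map (fun j => sigmaTMat r 2 (j + 1))).prod from rfl,
    h1, ampMat_one, one_mul]
  rw [Finset.sum_range_succ, Finset.sum_range_one]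
  simp [List.range_succ]

end Aux

/-- for an involutive set-theoretic solution `r` of the YBE on a nonempty finite
set `X` with linearization `T`, the twisted symmetrizers `P_{T,n}` are injective for all `n`
iff `r = id`. -/
theorem twistedSymmetrizer_injective_iff_id
    {X : Type*} [Fintype X] [DecidableEq X] [Nonempty X]
    (r : X × X → X × X) (hYBE : SetTheoreticYBE r) (hinv : r ∘ r = id) :
    (∀ n : ℕ, Function.Injective
      (Matrix.toEuclideanCLM (𝕜 := ℂ) (twistedSymmetrizer r n))) ↔ r = id := by
  constructor
  · intro hinj
    funext p
    by_contra hne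
    obtain ⟨x, y⟩ := p
    have hinv' : ∀ q, r (r q) = q := fun q => congrFun hinv q
    have hσf : sigmaMap r 2 1 ![x, y] = ![(r (x, y)).1, (r (x, y)).2] := by
      rw [sigmaMap_two]; simp
    have hσσ : sigmaMap r 2 1 (sigmaMap r 2 1 ![x, y]) = ![x, y] := by
      rw [hσf, sigmaMap_two]
      funext j
      fin_cases j <;> simp [hinv' (x, y)]
    have hneq : sigmaMap r 2 1 ![x, y] ≠ ![x, y] := by
      intro h
      rw [hσf] at h
      have h0 := congrFun h 0
      have h1 := congrFun h 1
      simp at h0 h1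
      have : r (x, y) = (x, y) := Prod.ext h0 h1
      exact hne this
    set v : (Fin 2 → X) → ℂ :=
      Pi.single ![x, y] 1 - Pi.single (sigmaMap r 2 1 ![x, y]) 1 with hv
    have hTvec : ∀ g : Fin 2 → X,
        (sigmaTMat r 2 1).mulVec (Pi.single g (1 : ℂ)) = Pi.single (sigmaMap r 2 1 g) 1 := by
      intro g
      funext i
      rw [Matrix.mulVec_single]
      simp [sigmaTMat, Pi.single_apply]
    have hlin : Matrix.toLin' (twistedSymmetrizer r 2) v = 0 := by
      rw [twistedSymmetrizer_two, Matrix.toLin'_apply, hv, Matrix.add_mulVec,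
        Matrix.one_mulVec, Matrix.mulVec_sub, hTvec, hTvec, hσσ]
      abel
    have hker : Matrix.toEuclideanCLM (𝕜 := ℂ)
        (twistedSymmetrizer r 2) ((WithLp.equiv 2 _).symm v) = 0 := by
      rw [WithLp.equiv_symm_apply, Matrix.toEuclideanCLM_toLp, ← Matrix.toLin'_apply, hlin]
      rfl
    have hw0 : (WithLp.equiv 2 ((Fin 2 → X) → ℂ)).symm v = 0 :=
      hinj 2 (by rw [hker, map_zero])
    have hv0 : v = 0 := by
      simpa using congrArg (WithLp.equiv 2 ((Fin 2 → X) → ℂ)) hw0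
    have := congrFun hv0 ![x, y]
    rw [hv] at this
    rw [Pi.sub_apply, Pi.single_eq_same, Pi.single_eq_of_ne (fun h => hneq h.symm)] at this
    norm_num at this
  · rintro rfl n
    rw [twistedSymmetrizer_id]
    have hfac : (n.factorial : ℂ) ≠ 0 := by exact_mod_cast n.factorial_ne_zero
    intro a b hab
    simp only [map_smul, map_one] at hab
    exact smul_right_injective _ hfac hab
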